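/- Right angle in the seven-piece refinement: let D, E, F ∈ ℝ² be affinely independent with incenter I. Let P be a point on the segment [D, E] and P' a point on the segment [D, F] such that ⟪P − I, D − I⟫ = 0 and ⟪P' − I, D − I⟫ = 0 (so P and P' lie on the line through I perpendicular to DI). Let Q be the reflection of P across the line through E and I (the affine span of {E, I}). Then ∠ P Q P' = π/2. -/
import Mathlib


noncomputable section

open EuclideanGeometry Real
open scoped RealInnerProductSpace

/-- The Euclidean plane. -/
abbrev Plane : Type := EuclideanSpace ℝ (Fin 2)

/-- The incenter of triangle `ABC`: the barycentric combination with weights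
proportional to the opposite side lengths. -/
def triIncenter (A B C : Plane) : Plane :=
  (dist B C / (dist B C + dist C A + dist A B)) • A +
  (dist C A / (dist B C + dist C A + dist A B)) • B +
  (dist A B / (dist B C + dist C A + dist A B)) • C

/-- Right angle in the seven-piece refinement: with `P`, `P'` the intersections of
the perpendicular to `DI` through the incenter `I` with the sides `DE`, `DF`, and
`Q` the reflection of `P` across line `EI`, the angle `∠ P Q P'` is right. -/
theorem seven_piece_right_angle (D E F : Plane)
    (hDEF : AffineIndependent ℝ ![D, E, F])
    (I : Plane) (hI : I = triIncenter D E F)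
    (P : Plane) (hP : P ∈ segment ℝ D E)
    (hPperp : ⟪P - I, D - I⟫ = 0)
    (P' : Plane) (hP' : P' ∈ segment ℝ D F)
    (hP'perp : ⟪P' - I, D - I⟫ = 0)
    (Q : Plane) (hQ : Q = EuclideanGeometry.reflection (affineSpan ℝ {E, I}) P) :
    ∠ P Q P' = π / 2 := by
  have hDE : D ≠ E := by
    have := hDEF.injective.ne (show (0 : Fin 3) ≠ 1 by decide); simpa using this
  have hDF : D ≠ F := by
    have := hDEF.injective.ne (show (0 : Fin 3) ≠ 2 by decide); simpa using this
  have hEF : E ≠ F := by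
    have := hDEF.injective.ne (show (1 : Fin 3) ≠ 2 by decide); simpa using this
  set a : ℝ := dist E F with ha_def
  set b : ℝ := dist F D with hb_def
  set c : ℝ := dist D E with hc_def
  have ha : 0 < a := dist_pos.2 hEF
  have hb : 0 < b := dist_pos.2 (Ne.symm hDF)
  have hc : 0 < c := dist_pos.2 hDE
  set σ : ℝ := a + b + c with hσ_def
  have hσ : 0 < σ := by positivity
  set e : Plane := E - D with he_def
  set f : Plane := F - D with hf_def
  have hne : ‖e‖ = c := by rw [hc_def, dist_eq_norm, he_def, norm_sub_rev]
  have hnf : ‖f‖ = b := by rw [hb_def, dist_eq_norm, hf_def]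
  set k : ℝ := ⟪e, f⟫ with hk_def
  -- strict Cauchy-Schwarz: b*c + k > 0
  have hbck : 0 < b * c + k := by
    have hind : ‖-f‖ • e ≠ ‖e‖ • (-f) := by
      intro h
      have hce : ‖e‖ ≠ 0 := by rw [hne]; exact ne_of_gt hc
      have h2 : ‖e‖ • f = -(‖f‖ • e) := by
        rw [norm_neg] at h
        have : ‖f‖ • e = -(‖e‖ • f) := by rw [h]; simp
        rw [this]; simp
      have hmul : ‖e‖ * (‖f‖ / ‖e‖) = ‖f‖ := by field_simp
      have hf' : f = (-(‖f‖ / ‖e‖)) • e := by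
        apply smul_right_injective Plane hce
        show ‖e‖ • f = ‖e‖ • ((-(‖f‖ / ‖e‖)) • e)
        rw [h2, smul_smul, mul_neg, hmul, neg_smul]
      have hcol : Collinear ℝ ({D, E, F} : Set Plane) := by
        apply (collinear_iff_of_mem (Set.mem_insert D {E, F})).2
        refine ⟨e, fun p hp => ?_⟩
        rcases hp with rfl | rfl | hp3
        · exact ⟨0, by simp⟩
        · refine ⟨1, ?_⟩
          rw [eq_vadd_iff_vsub_eq, one_smul]
          exact (vsub_eq_sub _ _).trans he_def.symm
        · rw [Set.mem_singleton_iff] at hp3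
          subst hp3
          refine ⟨-(‖f‖ / ‖e‖), ?_⟩
          rw [eq_vadd_iff_vsub_eq, vsub_eq_sub, ← hf_def]
          exact hf'
      exact (affineIndependent_iff_not_collinear_set.1 hDEF) hcol
    have := inner_lt_norm_mul_iff_real.2 hind
    have h2 : -k < c * b := by
      rw [norm_neg, hne, hnf] at this
      simpa [hk_def, inner_neg_right] using this
    nlinarith
  -- barycentric expansion of I - D
  have hID : I - D = (b / σ) • e + (c / σ) • f := by
    rw [hI, triIncenter, ← ha_def, ← hb_def, ← hc_def, ← hσ_def, he_def, hf_def]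
    have haσ : a / σ = 1 - b / σ - c / σ := by field_simp; ring
    rw [haσ]
    module
  have hee : ⟪e, e⟫ = c ^ 2 := by rw [real_inner_self_eq_norm_sq, hne]
  have hffi : ⟪f, f⟫ = b ^ 2 := by rw [real_inner_self_eq_norm_sq, hnf]
  have heID : ⟪e, I - D⟫ = (b / σ) * c ^ 2 + (c / σ) * k := by
    rw [hID, inner_add_right, real_inner_smul_right, real_inner_smul_right, hee, ← hk_def]
  have hfID : ⟪f, I - D⟫ = (b / σ) * k + (c / σ) * b ^ 2 := by
    rw [hID, inner_add_right, real_inner_smul_right, real_inner_smul_right, hffi,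
      real_inner_comm e f, ← hk_def]
  have hIDID : ⟪I - D, I - D⟫ =
      (b / σ) * ((b / σ) * c ^ 2 + (c / σ) * k) + (c / σ) * ((b / σ) * k + (c / σ) * b ^ 2) := by
    nth_rewrite 1 [hID]
    rw [inner_add_left, real_inner_smul_left, real_inner_smul_left, heID, hfID]
  -- P on segment DE
  rw [segment_eq_image'] at hP hP'
  obtain ⟨t, _, hPt⟩ := hP
  obtain ⟨s, _, hPs⟩ := hP'
  -- derive the parameter values
  have key : ∀ (X : Plane) (v : Plane) (r : ℝ), X = D + r • v → ⟪X - I, D - I⟫ = 0 →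
      r * ⟪v, I - D⟫ = ⟪I - D, I - D⟫ := by
    intro X v r hX hXp
    have h1 : X - I = r • v - (I - D) := by rw [hX]; abel
    have h2 : D - I = -(I - D) := by abel
    rw [h1, h2, inner_neg_right, inner_sub_left, real_inner_smul_left] at hXp
    linarith [hXp]
  have hkeyP := key P e t hPt.symm hPperp
  have hkeyP' := key P' f s hPs.symm hP'perp
  have ht : t = 2 * b / σ := by
    have hB : (c / σ) * (b * c + k) ≠ 0 := by positivity
    apply mul_right_cancel₀ hB
    rw [heID, hIDID] at hkeyP
    linear_combination hkeyP
  have hs : s = 2 * c / σ := by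
    have hB : (b / σ) * (b * c + k) ≠ 0 := by positivity
    apply mul_right_cancel₀ hB
    rw [hfID, hIDID] at hkeyP'
    linear_combination hkeyP' 
  have hPI : P - I = (b / σ) • e - (c / σ) • f := by
    rw [← hPt, ht]
    have : D + (2 * b / σ) • e - I = (2 * b / σ) • e - (I - D) := by abel
    rw [this, hID]
    match_scalars <;> ring
  have hP'I : P' - I = -(P - I) := by
    rw [← hPs, hs, hPI]
    have : D + (2 * c / σ) • f - I = (2 * c / σ) • f - (I - D) := by abel
    rw [this, hID]
    match_scalars <;> ring
  -- reflection preserves distance to I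
  haveI : Nonempty (affineSpan ℝ ({E, I} : Set Plane)) :=
    ⟨⟨I, mem_affineSpan ℝ (by simp)⟩⟩
  have hQI : ‖Q - I‖ = ‖P - I‖ := by
    have hImem : I ∈ affineSpan ℝ ({E, I} : Set Plane) := mem_affineSpan ℝ (by simp)
    have := EuclideanGeometry.dist_reflection_eq_of_mem (affineSpan ℝ ({E, I} : Set Plane))
      hImem P
    rw [← hQ] at this
    rw [dist_eq_norm, dist_eq_norm, norm_sub_rev I Q, norm_sub_rev I P] at this
    exact this
  -- final inner product computation
  have hinner : ⟪P - Q, P' - Q⟫ = 0 := by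
    have h1 : P - Q = (P - I) - (Q - I) := by abel
    have h2 : P' - Q = -(P - I) - (Q - I) := by rw [← hP'I]; abel
    rw [h1, h2]
    have hq : ⟪Q - I, Q - I⟫ = ⟪P - I, P - I⟫ := by
      rw [real_inner_self_eq_norm_sq, real_inner_self_eq_norm_sq, hQI]
    have hcomm := real_inner_comm (P - I) (Q - I)
    simp only [inner_sub_left, inner_sub_right, inner_neg_left, inner_neg_right] at hq hcomm ⊢
    linarith [hq, hcomm]
  rw [EuclideanGeometry.angle]
  have hv1 : P -ᵥ Q = P - Q := rfl
  have hv2 : P' -ᵥ Q = P' - Q := rfl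
  rw [hv1, hv2]
  exact (InnerProductGeometry.inner_eq_zero_iff_angle_eq_pi_div_two _ _).1 hinner
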